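/- Let λ be a partition of n with all parts of size at least m+1, let C_λ be the corresponding conjugacy class of S_n, and let K be a permutation constraint of size m on {1,…,n}. If K is acyclic, then #{ω ∈ C_λ : ω satisfies K} · (n−1)(n−2)⋯(n−m) = |C_λ|, i.e., the probability that a uniformly random ω ∈ C_λ satisfies K equals 1/((n−1)(n−2)⋯(n−m)). If K is not acyclic, then no ω ∈ C_λ satisfies K. -/

import Mathlib

/-- The conjugacy class of `S_n` consisting of permutations of cycle type `lam`
(Mathlib's `cycleType` omits fixed points, so we compare with the parts of `lam` not equal
to `1`). -/
noncomputable def conjClass (n : ℕ) (lam : n.Partition) : Finset (Equiv.Perm (Fin n)) :=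
  Finset.univ.filter fun ω => ω.cycleType = Multiset.filter (fun i => i ≠ 1) lam.parts

/-- A constraint is well-defined if the first coordinates of its pairs are pairwise
distinct and the second coordinates are pairwise distinct. -/
def WellDefinedConstraint {n : ℕ} (K : Finset (Fin n × Fin n)) : Prop :=
  (∀ p ∈ K, ∀ q ∈ K, p.1 = q.1 → p = q) ∧ (∀ p ∈ K, ∀ q ∈ K, p.2 = q.2 → p = q)

/-- The successor of `t` in `Fin k`, computed modulo `k`. -/
def succMod {k : ℕ} (t : Fin k) : Fin k := ⟨((t : ℕ) + 1) % k, Nat.mod_lt _ t.pos⟩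

/-- A constraint is acyclic if it is well-defined and there is no sequence of distinct
elements `c_1, …, c_k` (`k ≥ 1`) with `(c_1,c_2), (c_2,c_3), …, (c_{k-1},c_k), (c_k,c_1)`
all in `K` (the successor index is taken cyclically in `Fin k`). -/
def AcyclicConstraint {n : ℕ} (K : Finset (Fin n × Fin n)) : Prop :=
  WellDefinedConstraint K ∧
    ¬ ∃ (k : ℕ), 0 < k ∧ ∃ c : Fin k → Fin n, Function.Injective c ∧
      ∀ t : Fin k, (c t, c (succMod t)) ∈ K

namespace Stmt16Aux

variable {n : ℕ}

/-- cycle existence -/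
def hasCyc (K : Finset (Fin n × Fin n)) : Prop :=
  ∃ (k : ℕ), 0 < k ∧ ∃ c : Fin k → Fin n, Function.Injective c ∧
      ∀ t : Fin k, (c t, c (succMod t)) ∈ K

lemma acyclic_iff (K : Finset (Fin n × Fin n)) :
    AcyclicConstraint K ↔ WellDefinedConstraint K ∧ ¬ hasCyc K := Iff.rfl

/-- From a repeating chain we extract a cycle. -/
lemma hasCyc_of_repeat (K : Finset (Fin n × Fin n)) :
    ∀ (d : ℕ) (g : ℕ → Fin n) (a b : ℕ), b - a = d → a < b → g a = g b →
      (∀ t, a ≤ t → t < b → (g t, g (t + 1)) ∈ K) → hasCyc K := by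
  intro d
  induction d using Nat.strong_induction_on with
  | _ d ih =>
    intro g a b hd hab hg hedge
    by_cases hinj : ∀ u v, a ≤ u → u < v → v < b → g u ≠ g v
    · refine ⟨b - a, by omega, fun t => g (a + t.val), ?_, ?_⟩
      · intro t1 t2 h12
        by_contra hne
        have hne' : t1.val ≠ t2.val := fun h => hne (Fin.ext h)
        rcases Nat.lt_or_ge t1.val t2.val with h | h
        · exact hinj (a + t1.val) (a + t2.val) (by omega) (by omega)
            (by have := t2.isLt; omega) h12
        · have h' : t2.val < t1.val := by omega
          exact hinj (a + t2.val) (a + t1.val) (by omega) (by omega)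
            (by have := t1.isLt; omega) h12.symm
      · intro t
        have htlt : t.val < b - a := t.isLt
        by_cases hlast : t.val + 1 < b - a
        · have hs : (succMod t).val = t.val + 1 := Nat.mod_eq_of_lt hlast
          have h1 := hedge (a + t.val) (by omega) (by omega)
          have h2 : a + t.val + 1 = a + (succMod t).val := by omega
          rwa [h2] at h1
        · have ht1 : t.val + 1 = b - a := by omega
          have hs : (succMod t).val = 0 := by
            show (t.val + 1) % (b - a) = 0
            rw [ht1, Nat.mod_self]
          have h1 := hedge (b - 1) (by omega) (by omega)
          have e1 : a + t.val = b - 1 := by omega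
          have e2 : b - 1 + 1 = b := by omega
          rw [e2] at h1
          show (g (a + t.val), g (a + (succMod t).val)) ∈ K
          rw [hs, e1]
          simpa [hg] using h1
    · push_neg at hinj
      obtain ⟨u, v, hau, huv, hvb, hguv⟩ := hinj
      exact ih (v - u) (by omega) g u v rfl huv hguv
        (fun t h1 h2 => hedge t (by omega) (by omega))

/-- In a nonempty acyclic constraint there is a pair whose second coordinate is
not a first coordinate. -/
lemma exists_terminal (K : Finset (Fin n × Fin n)) (hwd : WellDefinedConstraint K)
    (hnc : ¬ hasCyc K) (hne : K.Nonempty) :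
    ∃ q ∈ K, q.2 ∉ K.image Prod.fst := by
  by_contra hcon
  push_neg at hcon
  obtain ⟨q0, hq0⟩ := hne
  -- next function
  have hnxt : ∀ x : Fin n, x ∈ K.image Prod.fst → ∃ q, q ∈ K ∧ q.1 = x := by
    intro x hx
    obtain ⟨q, hq, hq1⟩ := Finset.mem_image.mp hx
    exact ⟨q, hq, hq1⟩
  classical
  let nxt : Fin n → Fin n := fun x =>
    if h : ∃ q, q ∈ K ∧ q.1 = x then h.choose.2 else x
  let g : ℕ → Fin n := fun t => nxt^[t] q0.1
  have hstep : ∀ x : Fin n, x ∈ K.image Prod.fst → (x, nxt x) ∈ K := by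
    intro x hx
    obtain ⟨q, hq, hq1⟩ := hnxt x hx
    have h : ∃ q, q ∈ K ∧ q.1 = x := ⟨q, hq, hq1⟩
    have hspec := h.choose_spec
    show (x, dite _ _ _) ∈ K
    rw [dif_pos h]
    have : (x, h.choose.2) = h.choose := Prod.ext hspec.2.symm rfl
    rw [this]
    exact hspec.1
  have hinv : ∀ t : ℕ, g t ∈ K.image Prod.fst ∧ (g t, g (t + 1)) ∈ K := by
    intro t
    induction t with
    | zero =>
      have h0 : g 0 ∈ K.image Prod.fst :=
        Finset.mem_image.mpr ⟨q0, hq0, rfl⟩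
      have := hstep _ h0
      exact ⟨h0, by simpa [g, Function.iterate_succ_apply'] using this⟩
    | succ t iht =>
      have hmem : g (t + 1) ∈ K.image Prod.fst := by
        have := hcon _ iht.2
        simpa using this
      have := hstep _ hmem
      exact ⟨hmem, by simpa [g, Function.iterate_succ_apply'] using this⟩
  -- pigeonhole
  have : ¬ Function.Injective (fun t : Fin (n + 1) => g t.val) := by
    intro hinj
    have := Fintype.card_le_of_injective _ hinj
    simp at this
  rw [Function.not_injective_iff] at this
  obtain ⟨u, v, huv, hne'⟩ := this
  rcases Nat.lt_or_ge u.val v.val with h | h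
  · exact hnc (hasCyc_of_repeat K (v.val - u.val) g u.val v.val rfl h huv
      (fun t _ _ => (hinv t).2))
  · have h' : v.val < u.val := by
      rcases Nat.lt_or_ge v.val u.val with h' | h'
      · exact h'
      · exact absurd (Fin.ext (by omega)) hne'
    exact hnc (hasCyc_of_repeat K (u.val - v.val) g v.val u.val rfl h' huv.symm
      (fun t _ _ => (hinv t).2))

/-- No permutation in the conjugacy class satisfies a non-acyclic constraint. -/
lemma no_sat_of_not_acyclic (lam : n.Partition) (K : Finset (Fin n × Fin n))
    (hparts : ∀ p ∈ lam.parts, K.card + 1 ≤ p) (hK : ¬ AcyclicConstraint K) :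
    ∀ ω ∈ conjClass n lam, ¬ (∀ p ∈ K, ω p.1 = p.2) := by
  intro ω hω hsat
  by_cases hwd : WellDefinedConstraint K
  · -- then there is a cycle
    have hcyc : hasCyc K := by
      by_contra h
      exact hK ⟨hwd, h⟩
    obtain ⟨k, hk, c, hcinj, hcedge⟩ := hcyc
    -- k ≤ K.card
    have hkm : k ≤ K.card := by
      have hinj : Function.Injective (fun t : Fin k => (⟨(c t, c (succMod t)), hcedge t⟩ :
          {x // x ∈ K})) := by
        intro t1 t2 h
        have : c t1 = c t2 := congrArg (fun z => z.val.1) h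
        exact hcinj this
      have := Fintype.card_le_of_injective _ hinj
      simpa [Fintype.card_coe] using this
    -- cycleType equals parts
    have hωt : ω.cycleType = lam.parts := by
      have hmem : ω ∈ Finset.univ.filter
          fun ω : Equiv.Perm (Fin n) =>
            ω.cycleType = Multiset.filter (fun i => i ≠ 1) lam.parts := hω
      have h1 := (Finset.mem_filter.mp hmem).2
      have h2 : Multiset.filter (fun i => i ≠ 1) lam.parts = lam.parts :=
        Multiset.filter_eq_self.mpr (fun a ha => by have := hparts a ha; omega)
      rw [h1, h2]
    -- support is everything
    have hsup : ω.support = Finset.univ := by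
      apply Finset.eq_univ_of_card
      have h1 := Equiv.Perm.sum_cycleType ω
      rw [hωt, lam.parts_sum] at h1
      simp [← h1]
    have hfix : ∀ x : Fin n, ω x ≠ x := by
      intro x
      have : x ∈ ω.support := hsup ▸ Finset.mem_univ x
      exact Equiv.Perm.mem_support.mp this
    -- iteration along the cycle
    set x0 : Fin n := c ⟨0, hk⟩ with hx0
    have hpow : ∀ t : ℕ, (ω ^ t) x0 = c ⟨t % k, Nat.mod_lt _ hk⟩ := by
      intro t
      induction t with
      | zero => simp [hx0]
      | succ t iht =>
        rw [pow_succ' ω t, Equiv.Perm.mul_apply, iht]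
        have := hsat _ (hcedge ⟨t % k, Nat.mod_lt _ hk⟩)
        simp only at this
        rw [this]
        congr 1
        apply Fin.ext
        show (t % k + 1) % k = (t + 1) % k
        exact Nat.mod_add_mod t k 1
    have hfixk : (ω ^ k) x0 = x0 := by
      rw [hpow k]
      congr 1
      exact Fin.ext (by simp)
    -- cycleOf
    classical
    have hx : ω x0 ≠ x0 := hfix x0
    have hic : (ω.cycleOf x0).IsCycle := Equiv.Perm.isCycle_cycleOf ω hx
    have hone : (ω.cycleOf x0) ^ k = 1 := by
      rw [hic.pow_eq_one_iff]
      refine ⟨x0, ?_, ?_⟩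
      · rw [Equiv.Perm.cycleOf_apply_self]; exact hx
      · rw [Equiv.Perm.cycleOf_pow_apply_self]; exact hfixk
    have hdvd : orderOf (ω.cycleOf x0) ∣ k := orderOf_dvd_of_pow_eq_one hone
    have hcard : (ω.cycleOf x0).support.card ≤ k := by
      rw [← hic.orderOf]
      exact Nat.le_of_dvd hk hdvd
    have hmemct : (ω.cycleOf x0).support.card ∈ ω.cycleType := by
      rw [Equiv.Perm.cycleType_def]
      apply Multiset.mem_map.mpr
      refine ⟨ω.cycleOf x0, ?_, rfl⟩
      rw [← Finset.mem_def]
      exact Equiv.Perm.cycleOf_mem_cycleFactorsFinset_iff.mpr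
        (Equiv.Perm.mem_support.mpr hx)
    rw [hωt] at hmemct
    have := hparts _ hmemct
    omega
  · -- not well-defined: direct contradiction
    unfold WellDefinedConstraint at hwd
    push_neg at hwd
    rcases Classical.em (∀ p ∈ K, ∀ q ∈ K, p.1 = q.1 → p = q) with h1 | h1
    · obtain ⟨p, hp, q, hq, hpq2, hpqne⟩ := hwd h1
      apply hpqne
      have hfst : p.1 = q.1 := ω.injective (by rw [hsat p hp, hsat q hq, hpq2])
      exact h1 p hp q hq hfst
    · push_neg at h1
      obtain ⟨p, hp, q, hq, hpq1, hpqne⟩ := h1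
      apply hpqne
      have h2 : p.2 = q.2 := by
        rw [← hsat p hp, ← hsat q hq, hpq1]
      exact Prod.ext hpq1 h2


/-! ### chain machinery -/

noncomputable def predFn (K : Finset (Fin n × Fin n)) (x : Fin n) : Fin n :=
  if h : ∃ q, q ∈ K ∧ q.2 = x then h.choose.1 else x

noncomputable def chain (K : Finset (Fin n × Fin n)) (i : Fin n) (t : ℕ) : Fin n :=
  (predFn K)^[t] i

lemma chain_zero (K : Finset (Fin n × Fin n)) (i : Fin n) : chain K i 0 = i := rfl

lemma chain_succ (K : Finset (Fin n × Fin n)) (i : Fin n) (t : ℕ) :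
    chain K i (t + 1) = predFn K (chain K i t) :=
  Function.iterate_succ_apply' _ _ _

lemma predFn_spec {K : Finset (Fin n × Fin n)} {x : Fin n}
    (hx : x ∈ K.image Prod.snd) : (predFn K x, x) ∈ K := by
  obtain ⟨q, hq, hq2⟩ := Finset.mem_image.mp hx
  have h : ∃ q, q ∈ K ∧ q.2 = x := ⟨q, hq, hq2⟩
  show (dite _ _ _, x) ∈ K
  rw [dif_pos h]
  have : (h.choose.1, x) = h.choose := Prod.ext rfl h.choose_spec.2.symm
  rw [this]
  exact h.choose_spec.1

lemma predFn_eq_self {K : Finset (Fin n × Fin n)} {x : Fin n}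
    (hx : x ∉ K.image Prod.snd) : predFn K x = x := by
  have h : ¬ ∃ q, q ∈ K ∧ q.2 = x := by
    rintro ⟨q, hq, hq2⟩
    exact hx (Finset.mem_image.mpr ⟨q, hq, hq2⟩)
  show dite _ _ _ = x
  rw [dif_neg h]

lemma predFn_unique {K : Finset (Fin n × Fin n)} (hwd : WellDefinedConstraint K)
    {y x : Fin n} (h : (y, x) ∈ K) : y = predFn K x := by
  have hx : x ∈ K.image Prod.snd := Finset.mem_image.mpr ⟨(y, x), h, rfl⟩
  have hs := predFn_spec hx
  have := hwd.2 (y, x) h (predFn K x, x) hs rfl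
  exact congrArg Prod.fst this

lemma chain_no_repeat {K : Finset (Fin n × Fin n)} (hnc : ¬ hasCyc K) {i : Fin n} {a b : ℕ}
    (hab : a < b) (hsec : ∀ t, t < b → chain K i t ∈ K.image Prod.snd) :
    chain K i a ≠ chain K i b := by
  intro heq
  apply hnc
  apply hasCyc_of_repeat K (b - a) (fun u => chain K i (b - u)) 0 (b - a) rfl (by omega)
  · show chain K i (b - 0) = chain K i (b - (b - a))
    have e : b - (b - a) = a := by omega
    have e0 : b - 0 = b := by omega
    rw [e, e0]
    exact heq.symm
  · intro t _ ht
    show (chain K i (b - t), chain K i (b - (t + 1))) ∈ K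
    have e : b - t = (b - (t + 1)) + 1 := by omega
    rw [e, chain_succ]
    exact predFn_spec (hsec (b - (t + 1)) (by omega))

lemma chain_exists_stop {K : Finset (Fin n × Fin n)} (hnc : ¬ hasCyc K) (i : Fin n) :
    ∃ t, chain K i t ∉ K.image Prod.snd := by
  by_contra h
  push_neg at h
  have hinj : Function.Injective (fun t : Fin (n + 1) => chain K i t.val) := by
    intro u v huv
    by_contra hne
    have hne' : u.val ≠ v.val := fun hh => hne (Fin.ext hh)
    rcases Nat.lt_or_ge u.val v.val with hlt | hge
    · exact chain_no_repeat hnc hlt (fun t _ => h t) huv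
    · exact chain_no_repeat hnc (by omega : v.val < u.val) (fun t _ => h t) huv.symm
  have := Fintype.card_le_of_injective _ hinj
  simp at this

lemma path_eq_chain {K : Finset (Fin n × Fin n)} (hwd : WellDefinedConstraint K) {i : Fin n} :
    ∀ (r : ℕ) (d : ℕ → Fin n), (∀ u, u < r → (d u, d (u + 1)) ∈ K) → d r = i →
      ∀ u, u ≤ r → d (r - u) = chain K i u := by
  intro r d hedge hdr u
  induction u with
  | zero =>
    intro _
    simpa [chain_zero] using hdr
  | succ u ihu =>
    intro hur
    have h1 : d (r - u) = chain K i u := ihu (by omega)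
    have he : (d (r - (u + 1)), d (r - u)) ∈ K := by
      have e : r - (u + 1) + 1 = r - u := by omega
      have := hedge (r - (u + 1)) (by omega)
      rwa [e] at this
    rw [h1] at he
    rw [chain_succ]
    exact predFn_unique hwd he

lemma hasCyc_mono {K K' : Finset (Fin n × Fin n)} (hsub : K' ⊆ K) (h : hasCyc K') :
    hasCyc K := by
  obtain ⟨k, hk, c, hinj, hedge⟩ := h
  exact ⟨k, hk, c, hinj, fun t => hsub (hedge t)⟩

/-! ### conjugation and fiberwise sum -/

lemma card_filter_conj (lam : n.Partition) (σ : Equiv.Perm (Fin n))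
    (K : Finset (Fin n × Fin n)) :
    ((conjClass n lam).filter fun ω =>
        ∀ p ∈ K.image (fun q => (σ q.1, σ q.2)), ω p.1 = p.2).card
    = ((conjClass n lam).filter fun ω => ∀ p ∈ K, ω p.1 = p.2).card := by
  classical
  apply Finset.card_nbij' (fun ω => σ⁻¹ * ω * σ) (fun ω => σ * ω * σ⁻¹)
  · intro ω hω
    rw [Finset.mem_coe, Finset.mem_filter] at hω ⊢
    obtain ⟨hc, hsat⟩ := hω
    constructor
    · simp only [conjClass, Finset.mem_filter] at hc ⊢
      refine ⟨Finset.mem_univ _, ?_⟩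
      have : (σ⁻¹ * ω * σ⁻¹⁻¹).cycleType = ω.cycleType := Equiv.Perm.cycleType_conj
      rw [inv_inv] at this
      rw [this]
      exact hc.2
    · intro p hp
      have hmem : (σ p.1, σ p.2) ∈ K.image (fun q => (σ q.1, σ q.2)) :=
        Finset.mem_image.mpr ⟨p, hp, rfl⟩
      have := hsat _ hmem
      simp only [Equiv.Perm.mul_apply] at this ⊢
      rw [this]
      simp
  · intro ω hω
    rw [Finset.mem_coe, Finset.mem_filter] at hω ⊢
    obtain ⟨hc, hsat⟩ := hω
    constructor
    · simp only [conjClass, Finset.mem_filter] at hc ⊢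
      refine ⟨Finset.mem_univ _, ?_⟩
      have : (σ * ω * σ⁻¹).cycleType = ω.cycleType := Equiv.Perm.cycleType_conj
      rw [this]
      exact hc.2
    · intro p hp
      obtain ⟨q, hq, hq'⟩ := Finset.mem_image.mp hp
      have := hsat q hq
      rw [← hq']
      simp only [Equiv.Perm.mul_apply]
      rw [show σ⁻¹ (σ q.1) = q.1 from σ.symm_apply_apply q.1]  -- might not directly apply; fix below
      rw [this]
  · intro ω _
    group
  · intro ω _
    group

lemma card_filter_sum (lam : n.Partition) (K : Finset (Fin n × Fin n)) (i : Fin n) :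
    ((conjClass n lam).filter fun ω => ∀ p ∈ K, ω p.1 = p.2).card
    = ∑ j : Fin n,
        ((conjClass n lam).filter fun ω => ∀ p ∈ insert (i, j) K, ω p.1 = p.2).card := by
  classical
  rw [Finset.card_eq_sum_card_fiberwise
    (f := fun ω : Equiv.Perm (Fin n) => ω i) (t := Finset.univ) (fun _ _ => Finset.mem_univ _)]
  apply Finset.sum_congr rfl
  intro j _
  congr 1
  ext ω
  simp only [Finset.mem_filter, Finset.forall_mem_insert]
  tauto


lemma chain_stable {K : Finset (Fin n × Fin n)} {i : Fin n} {T : ℕ}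
    (hT : chain K i T ∉ K.image Prod.snd) :
    ∀ t, T ≤ t → chain K i t = chain K i T := by
  intro t ht
  induction t with
  | zero =>
    have h0 : T = 0 := by omega
    rw [h0]
  | succ t iht =>
    rcases Nat.lt_or_ge t T with h | h
    · have h1 : T = t + 1 := by omega
      rw [h1]
    · have h1 := iht h
      rw [chain_succ, h1, predFn_eq_self hT]

/-! ### main counting lemma -/

lemma main_count (lam : n.Partition) :
    ∀ (m : ℕ) (K : Finset (Fin n × Fin n)), K.card = m → AcyclicConstraint K →
      (∀ q ∈ lam.parts, m + 1 ≤ q) →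
      ((conjClass n lam).filter fun ω => ∀ p ∈ K, ω p.1 = p.2).card
          * ∏ t ∈ Finset.Icc 1 m, (n - t) = (conjClass n lam).card := by
  intro m
  induction m with
  | zero =>
    intro K hcard _ _
    rw [Finset.card_eq_zero] at hcard
    subst hcard
    rw [show Finset.Icc 1 0 = (∅ : Finset ℕ) from Finset.Icc_eq_empty (by omega),
      Finset.prod_empty, mul_one]
    congr 1
    apply Finset.filter_true_of_mem
    intro ω _ p hp
    exact absurd hp (Finset.notMem_empty p)
  | succ m ihm =>
    suffices H : ∀ (pp : ℕ) (K : Finset (Fin n × Fin n)),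
        (K.image Prod.fst \ K.image Prod.snd).card = pp → K.card = m + 1 →
        AcyclicConstraint K → (∀ q ∈ lam.parts, m + 1 + 1 ≤ q) →
        ((conjClass n lam).filter fun ω => ∀ p ∈ K, ω p.1 = p.2).card
          * ∏ t ∈ Finset.Icc 1 (m + 1), (n - t) = (conjClass n lam).card by
      intro K h1 h2 h3
      exact H _ K rfl h1 h2 h3
    intro pp
    induction pp using Nat.strong_induction_on with
    | _ pp ihp =>
    intro K hpp hcard hacyc hparts
    classical
    obtain ⟨hwd, hncE⟩ := hacyc
    have hnc : ¬ hasCyc K := hncE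
    have hne : K.Nonempty := by
      rw [← Finset.card_pos, hcard]; omega
    obtain ⟨⟨i, j⟩, hijK, hjt0⟩ := exists_terminal K hwd hnc hne
    have hjt : j ∉ K.image Prod.fst := hjt0
    have hij_ne : i ≠ j := by
      intro h
      apply hnc
      refine ⟨1, one_pos, fun _ => i, fun a b _ => Subsingleton.elim a b, fun t => ?_⟩
      rw [← h] at hijK
      exact hijK
    set K' := K.erase (i, j) with hK'def
    have hins : insert (i, j) K' = K := Finset.insert_erase hijK
    have hcard' : K'.card = m := by
      rw [hK'def, Finset.card_erase_of_mem hijK, hcard]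
      omega
    have hsubK : K' ⊆ K := Finset.erase_subset _ _
    have hwd' : WellDefinedConstraint K' :=
      ⟨fun a ha b hb h => hwd.1 a (hsubK ha) b (hsubK hb) h,
       fun a ha b hb h => hwd.2 a (hsubK ha) b (hsubK hb) h⟩
    have hnc' : ¬ hasCyc K' := fun h => hnc (hasCyc_mono hsubK h)
    have hift : i ∉ K'.image Prod.fst := by
      intro hmem
      obtain ⟨q, hq, hq1⟩ := Finset.mem_image.mp hmem
      have : q = (i, j) := hwd.1 q (hsubK hq) (i, j) hijK (by rw [hq1])
      rw [this] at hq
      exact (Finset.notMem_erase _ _) hq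
    have hjs' : j ∉ K'.image Prod.snd := by
      intro hmem
      obtain ⟨q, hq, hq2⟩ := Finset.mem_image.mp hmem
      have : q = (i, j) := hwd.2 q (hsubK hq) (i, j) hijK (by rw [hq2])
      rw [this] at hq
      exact (Finset.notMem_erase _ _) hq
    have hjf' : j ∉ K'.image Prod.fst := by
      intro hmem
      apply hjt
      obtain ⟨q, hq, hq1⟩ := Finset.mem_image.mp hmem
      exact Finset.mem_image.mpr ⟨q, hsubK hq, hq1⟩
    -- the chain from i
    have hstop := chain_exists_stop hnc' i
    set T := Nat.find hstop with hTdef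
    have hsT : chain K' i T ∉ K'.image Prod.snd := Nat.find_spec hstop
    have hTmin : ∀ t, t < T → chain K' i t ∈ K'.image Prod.snd := by
      intro t ht
      have := Nat.find_min hstop ht
      exact not_not.mp this
    set s := chain K' i T with hsdef
    set S2 := K'.image Prod.snd with hS2def
    set T3 := (K'.image Prod.fst \ S2).erase s with hT3def
    set B := insert s S2 with hBdef
    set Fr := Finset.univ \ (B ∪ T3) with hFrdef
    have hsS2 : s ∉ S2 := hsT
    have hsfst_or : T = 0 ∨ s ∈ K'.image Prod.fst := by
      rcases Nat.eq_zero_or_pos T with h | h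
      · exact Or.inl h
      · right
        have e : T = (T - 1) + 1 := by omega
        have hmem : (chain K' i ((T - 1) + 1), chain K' i (T - 1)) ∈ K' := by
          rw [chain_succ]
          exact predFn_spec (hTmin (T - 1) (by omega))
        rw [← e] at hmem
        exact Finset.mem_image.mpr ⟨_, hmem, rfl⟩
    have hiB : i ∈ B ∪ T3 := by
      by_cases hiS2 : i ∈ S2
      · exact Finset.mem_union_left _ (Finset.mem_insert_of_mem hiS2)
      · have hT0 : T = 0 := by
          have h0 : chain K' i 0 ∉ K'.image Prod.snd := by
            rw [chain_zero]; exact hiS2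
          have hle : T ≤ 0 := by
            rw [hTdef]
            exact Nat.find_le (h := hstop) h0
          omega
        have hsi : s = i := by rw [hsdef, hT0, chain_zero]
        apply Finset.mem_union_left
        rw [← hsi]
        exact Finset.mem_insert_self s S2
    have hfstsub : K'.image Prod.fst ⊆ B ∪ T3 := by
      intro x hx
      by_cases hx2 : x ∈ S2
      · exact Finset.mem_union_left _ (Finset.mem_insert_of_mem hx2)
      · by_cases hxs : x = s
        · apply Finset.mem_union_left
          rw [hxs]
          exact Finset.mem_insert_self s S2
        · exact Finset.mem_union_right _
            (Finset.mem_erase.mpr ⟨hxs, Finset.mem_sdiff.mpr ⟨hx, hx2⟩⟩)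
    set P := ∏ t ∈ Finset.Icc 1 (m + 1), (n - t) with hPdef
    -- case (a): j' a second coordinate of K'
    have hvalS2 : ∀ j' ∈ S2,
        ((conjClass n lam).filter fun ω => ∀ p ∈ insert (i, j') K', ω p.1 = p.2).card = 0 := by
      intro j' hj'
      rw [Finset.card_eq_zero, Finset.filter_eq_empty_iff]
      intro ω _ hsat
      obtain ⟨q, hq, hq2⟩ := Finset.mem_image.mp hj'
      have h1 : ω i = j' := hsat _ (Finset.mem_insert_self _ _)
      have h2 : ω q.1 = j' := by
        rw [hsat q (Finset.mem_insert_of_mem hq), hq2]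
      have h3 : q.1 = i := ω.injective (h2.trans h1.symm)
      exact hift (Finset.mem_image.mpr ⟨q, hq, h3⟩)
    -- case (b): j' = s
    have hvals : ((conjClass n lam).filter fun ω =>
        ∀ p ∈ insert (i, s) K', ω p.1 = p.2).card = 0 := by
      have hnotmem : (i, s) ∉ K' := fun h => hift (Finset.mem_image.mpr ⟨_, h, rfl⟩)
      have hcardins : (insert (i, s) K').card = m + 1 := by
        rw [Finset.card_insert_of_notMem hnotmem, hcard']
      have hnacyc : ¬ AcyclicConstraint (insert (i, s) K') := by
        intro hA
        apply hA.2
        refine ⟨T + 1, Nat.succ_pos _, fun t => chain K' i (T - t.val), ?_, ?_⟩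
        · intro t1 t2 h12
          by_contra hne12
          have hlt1 := t1.isLt
          have hlt2 := t2.isLt
          have hne' : t1.val ≠ t2.val := fun hh => hne12 (Fin.ext hh)
          rcases Nat.lt_or_ge (T - t1.val) (T - t2.val) with hlt | hge
          · exact chain_no_repeat hnc' hlt (fun t ht => hTmin t (by omega)) h12
          · have hlt' : T - t2.val < T - t1.val := by omega
            exact chain_no_repeat hnc' hlt' (fun t ht => hTmin t (by omega)) h12.symm
        · intro t
          by_cases hlast : t.val + 1 < T + 1
          · have hsm : (succMod t).val = t.val + 1 := Nat.mod_eq_of_lt hlast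
            apply Finset.mem_insert_of_mem
            show (chain K' i (T - t.val), chain K' i (T - (succMod t).val)) ∈ K'
            rw [hsm]
            have e : T - t.val = (T - (t.val + 1)) + 1 := by omega
            rw [e, chain_succ]
            exact predFn_spec (hTmin _ (by omega))
          · have htT : t.val = T := by
              have := t.isLt
              omega
            have hsm : (succMod t).val = 0 := by
              show (t.val + 1) % (T + 1) = 0
              rw [htT]
              exact Nat.mod_self _
            show (chain K' i (T - t.val), chain K' i (T - (succMod t).val)) ∈ insert (i, s) K'
            rw [hsm, htT, Nat.sub_self, Nat.sub_zero, chain_zero]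
            rw [← hsdef]
            exact Finset.mem_insert_self _ _
      have hparts' : ∀ q ∈ lam.parts, (insert (i, s) K').card + 1 ≤ q := by
        intro q hq
        rw [hcardins]
        exact hparts q hq
      rw [Finset.card_eq_zero, Finset.filter_eq_empty_iff]
      exact no_sat_of_not_acyclic lam _ hparts' hnacyc
    -- identities for the sets of path starts
    have hstartsK : K.image Prod.fst \ K.image Prod.snd
        = insert i (K'.image Prod.fst) \ S2 := by
      rw [← hins, Finset.image_insert, Finset.image_insert]
      ext x
      simp only [Finset.mem_sdiff, Finset.mem_insert]
      constructor
      · rintro ⟨hx1, hx2⟩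
        exact ⟨hx1, fun hxS2 => hx2 (Or.inr hxS2)⟩
      · rintro ⟨hx1, hx2⟩
        refine ⟨hx1, ?_⟩
        rintro (hxj | hxS2)
        · rcases hx1 with hxi | hxf
          · exact hij_ne (hxi.symm.trans hxj)
          · exact hjf' (hxj ▸ hxf)
        · exact hx2 hxS2
    have hstartsE : ∀ j' : Fin n,
        (insert (i, j') K').image Prod.fst \ (insert (i, j') K').image Prod.snd
        = (insert i (K'.image Prod.fst) \ S2).erase j' := by
      intro j'
      rw [Finset.image_insert, Finset.image_insert]
      ext x
      simp only [Finset.mem_sdiff, Finset.mem_insert, Finset.mem_erase]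
      constructor
      · rintro ⟨hx1, hx2⟩
        exact ⟨fun h => hx2 (Or.inl h), hx1, fun h => hx2 (Or.inr h)⟩
      · rintro ⟨hxj', hx1, hx2⟩
        exact ⟨hx1, fun h => h.elim hxj' hx2⟩
    -- case (c): j' another path start
    have hvalT3 : ∀ j' ∈ T3,
        ((conjClass n lam).filter fun ω => ∀ p ∈ insert (i, j') K', ω p.1 = p.2).card
          * P = (conjClass n lam).card := by
      intro j' hj'
      obtain ⟨hj's, hj'St⟩ := Finset.mem_erase.mp hj'
      obtain ⟨hj'f, hj'S2⟩ := Finset.mem_sdiff.mp hj'St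
      have hj'i : j' ≠ i := fun h => hift (h ▸ hj'f)
      have hnotmem : (i, j') ∉ K' := fun h => hift (Finset.mem_image.mpr ⟨_, h, rfl⟩)
      have hwdE : WellDefinedConstraint (insert (i, j') K') := by
        constructor
        · intro a ha b hb hab
          rcases Finset.mem_insert.mp ha with ha' | ha' <;>
            rcases Finset.mem_insert.mp hb with hb' | hb'
          · rw [ha', hb']
          · exfalso
            apply hift
            refine Finset.mem_image.mpr ⟨b, hb', ?_⟩
            rw [ha'] at hab
            exact hab.symm
          · exfalso
            apply hift
            refine Finset.mem_image.mpr ⟨a, ha', ?_⟩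
            rw [hb'] at hab
            exact hab
          · exact hwd'.1 a ha' b hb' hab
        · intro a ha b hb hab
          rcases Finset.mem_insert.mp ha with ha' | ha' <;>
            rcases Finset.mem_insert.mp hb with hb' | hb'
          · rw [ha', hb']
          · exfalso
            apply hj'S2
            refine Finset.mem_image.mpr ⟨b, hb', ?_⟩
            rw [ha'] at hab
            exact hab.symm
          · exfalso
            apply hj'S2
            refine Finset.mem_image.mpr ⟨a, ha', ?_⟩
            rw [hb'] at hab
            exact hab
          · exact hwd'.2 a ha' b hb' hab
      have hncE2 : ¬ hasCyc (insert (i, j') K') := by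
        rintro ⟨k, hk, c, hcinj, hcedge⟩
        by_cases hall : ∀ t : Fin k, (c t, c (succMod t)) ∈ K'
        · exact hnc' ⟨k, hk, c, hcinj, hall⟩
        push_neg at hall
        obtain ⟨t0, ht0⟩ := hall
        have hedge0 : (c t0, c (succMod t0)) = (i, j') := by
          rcases Finset.mem_insert.mp (hcedge t0) with h | h
          · exact h
          · exact absurd h ht0
        have hct0 : c t0 = i := congrArg Prod.fst hedge0
        have hct0' : c (succMod t0) = j' := congrArg Prod.snd hedge0
        have hdedge : ∀ u, u < k - 1 →
            ((fun u => c ⟨(t0.val + 1 + u) % k, Nat.mod_lt _ hk⟩) u,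
             (fun u => c ⟨(t0.val + 1 + u) % k, Nat.mod_lt _ hk⟩) (u + 1)) ∈ K' := by
          intro u hu
          simp only
          have hsucc : (succMod (⟨(t0.val + 1 + u) % k, Nat.mod_lt _ hk⟩ : Fin k)).val
              = (t0.val + 1 + (u + 1)) % k := by
            show ((t0.val + 1 + u) % k + 1) % k = _
            rw [Nat.mod_add_mod]
            congr 1
          have hvne : (⟨(t0.val + 1 + u) % k, Nat.mod_lt _ hk⟩ : Fin k) ≠ t0 := by
            intro h
            have hval : (t0.val + 1 + u) % k = t0.val := congrArg Fin.val h
            have e : t0.val + 1 + u = t0.val + (u + 1) := by omega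
            rw [e] at hval
            rcases Nat.lt_or_ge (t0.val + (u + 1)) k with hx | hx
            · rw [Nat.mod_eq_of_lt hx] at hval
              omega
            · have hlt0 := t0.isLt
              have h2 : t0.val + (u + 1) - k < k := by omega
              rw [Nat.mod_eq_sub_mod hx, Nat.mod_eq_of_lt h2] at hval
              omega
          have hev := hcedge ⟨(t0.val + 1 + u) % k, Nat.mod_lt _ hk⟩
          rcases Finset.mem_insert.mp hev with h | h
          · exfalso
            apply hvne
            apply hcinj
            rw [hct0]
            exact congrArg Prod.fst h
          · have e2 : c (succMod (⟨(t0.val + 1 + u) % k, Nat.mod_lt _ hk⟩ : Fin k))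
                = c ⟨(t0.val + 1 + (u + 1)) % k, Nat.mod_lt _ hk⟩ := by
              congr 1
              exact Fin.ext hsucc
            rw [← e2]
            exact h
        have hd0 : (fun u => c ⟨(t0.val + 1 + u) % k, Nat.mod_lt _ hk⟩) (k - 1) = i := by
          simp only
          have e : (t0.val + 1 + (k - 1)) % k = t0.val := by
            have e1 : t0.val + 1 + (k - 1) = t0.val + k := by omega
            rw [e1, Nat.add_mod_right]
            exact Nat.mod_eq_of_lt t0.isLt
          rw [show (⟨(t0.val + 1 + (k - 1)) % k, Nat.mod_lt _ hk⟩ : Fin k) = t0 from Fin.ext e]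
          exact hct0
        have hchain := path_eq_chain hwd' (k - 1) _ hdedge hd0 (k - 1) le_rfl
        rw [Nat.sub_self] at hchain
        have hj'c : j' = chain K' i (k - 1) := by
          rw [← hchain]
          exact hct0'.symm
        have hT_le : T ≤ k - 1 := by
          by_contra hlt
          push_neg at hlt
          have := hTmin (k - 1) hlt
          rw [← hj'c] at this
          exact hj'S2 this
        have hstab : chain K' i (k - 1) = s := by
          rw [hsdef]
          exact chain_stable hsT (k - 1) hT_le
        exact hj's (hj'c.trans hstab)
      have hmeas : ((insert (i, j') K').image Prod.fst \
          (insert (i, j') K').image Prod.snd).card < pp := by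
        rw [hstartsE j']
        have hj'mem : j' ∈ insert i (K'.image Prod.fst) \ S2 :=
          Finset.mem_sdiff.mpr ⟨Finset.mem_insert_of_mem hj'f, hj'S2⟩
        rw [Finset.card_erase_of_mem hj'mem]
        have hpos : 0 < (insert i (K'.image Prod.fst) \ S2).card :=
          Finset.card_pos.mpr ⟨j', hj'mem⟩
        rw [hstartsK] at hpp
        omega
      exact ihp _ hmeas (insert (i, j') K') rfl
        (by rw [Finset.card_insert_of_notMem hnotmem, hcard'])
        ⟨hwdE, hncE2⟩ hparts
    -- case (d): j' fresh
    have hvalFr : ∀ j' ∈ Fr,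
        ((conjClass n lam).filter fun ω => ∀ p ∈ insert (i, j') K', ω p.1 = p.2).card
        = ((conjClass n lam).filter fun ω => ∀ p ∈ K, ω p.1 = p.2).card := by
      intro j' hj'
      have hj'nB : j' ∉ B ∪ T3 := (Finset.mem_sdiff.mp hj').2
      have hj'f : j' ∉ K'.image Prod.fst := fun h => hj'nB (hfstsub h)
      have hj'S2 : j' ∉ S2 := fun h =>
        hj'nB (Finset.mem_union_left _ (Finset.mem_insert_of_mem h))
      have hj'i : j' ≠ i := fun h => hj'nB (h ▸ hiB)
      have himg : K.image (fun q => ((Equiv.swap j j') q.1, (Equiv.swap j j') q.2))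
          = insert (i, j') K' := by
        rw [← hins, Finset.image_insert]
        have h1 : ((Equiv.swap j j') (i, j).1, (Equiv.swap j j') (i, j).2) = (i, j') := by
          show ((Equiv.swap j j') i, (Equiv.swap j j') j) = (i, j')
          rw [Equiv.swap_apply_of_ne_of_ne hij_ne (fun h => hj'i h.symm),
            Equiv.swap_apply_left]
        rw [h1]
        congr 1
        have heq : ∀ q ∈ K', ((Equiv.swap j j') q.1, (Equiv.swap j j') q.2) = q := by
          intro q hq
          have hq1j : q.1 ≠ j := fun h => hjf' (Finset.mem_image.mpr ⟨q, hq, h⟩)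
          have hq1j' : q.1 ≠ j' := fun h => hj'f (Finset.mem_image.mpr ⟨q, hq, h⟩)
          have hq2j : q.2 ≠ j := fun h => hjs' (Finset.mem_image.mpr ⟨q, hq, h⟩)
          have hq2j' : q.2 ≠ j' := fun h => hj'S2 (Finset.mem_image.mpr ⟨q, hq, h⟩)
          rw [Equiv.swap_apply_of_ne_of_ne hq1j hq1j',
            Equiv.swap_apply_of_ne_of_ne hq2j hq2j']
        calc K'.image (fun q => ((Equiv.swap j j') q.1, (Equiv.swap j j') q.2))
            = K'.image id := Finset.image_congr (fun q hq => heq q hq)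
          _ = K' := Finset.image_id
      have hcc := card_filter_conj lam (Equiv.swap j j') K
      rw [himg] at hcc
      exact hcc
    -- assemble
    have hsum := card_filter_sum lam K' i
    have houter : ((conjClass n lam).filter fun ω => ∀ p ∈ K', ω p.1 = p.2).card
        * ∏ t ∈ Finset.Icc 1 m, (n - t) = (conjClass n lam).card :=
      ihm K' hcard' ⟨hwd', hnc'⟩ (fun q hq => by have := hparts q hq; omega)
    have hPsplit : P = (∏ t ∈ Finset.Icc 1 m, (n - t)) * (n - (m + 1)) := by
      rw [hPdef, Finset.prod_Icc_succ_top (by omega : 1 ≤ m + 1)]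
    have hkey : ∑ j' : Fin n, P *
        ((conjClass n lam).filter fun ω => ∀ p ∈ insert (i, j') K', ω p.1 = p.2).card
        = (n - (m + 1)) * (conjClass n lam).card := by
      rw [← Finset.mul_sum, ← hsum, hPsplit]
      calc (∏ t ∈ Finset.Icc 1 m, (n - t)) * (n - (m + 1)) *
            ((conjClass n lam).filter fun ω => ∀ p ∈ K', ω p.1 = p.2).card
          = (n - (m + 1)) * (((conjClass n lam).filter fun ω => ∀ p ∈ K', ω p.1 = p.2).card
              * ∏ t ∈ Finset.Icc 1 m, (n - t)) := by ring
        _ = (n - (m + 1)) * (conjClass n lam).card := by rw [houter]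
    have hdisj1 : Disjoint B T3 := by
      rw [Finset.disjoint_left]
      intro x hxB hxT3
      obtain ⟨hxs, hxSt⟩ := Finset.mem_erase.mp hxT3
      rcases Finset.mem_insert.mp hxB with h | h
      · exact hxs h
      · exact (Finset.mem_sdiff.mp hxSt).2 h
    have hdisj2 : Disjoint (B ∪ T3) Fr := Finset.disjoint_sdiff
    have hunion : (B ∪ T3) ∪ Fr = Finset.univ := by
      rw [hFrdef]
      exact Finset.union_sdiff_of_subset (Finset.subset_univ _)
    have hsplitsum : ∑ j' : Fin n, P *
        ((conjClass n lam).filter fun ω => ∀ p ∈ insert (i, j') K', ω p.1 = p.2).card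
        = (∑ j' ∈ B, P *
            ((conjClass n lam).filter fun ω => ∀ p ∈ insert (i, j') K', ω p.1 = p.2).card)
          + (∑ j' ∈ T3, P *
            ((conjClass n lam).filter fun ω => ∀ p ∈ insert (i, j') K', ω p.1 = p.2).card)
          + (∑ j' ∈ Fr, P *
            ((conjClass n lam).filter fun ω => ∀ p ∈ insert (i, j') K', ω p.1 = p.2).card) := by
      rw [← hunion, Finset.sum_union hdisj2, Finset.sum_union hdisj1]
    have hsB : ∑ j' ∈ B, P *
        ((conjClass n lam).filter fun ω => ∀ p ∈ insert (i, j') K', ω p.1 = p.2).card = 0 := by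
      apply Finset.sum_eq_zero
      intro j' hj'
      rcases Finset.mem_insert.mp hj' with h | h
      · rw [h, hvals, mul_zero]
      · rw [hvalS2 j' h, mul_zero]
    have hsT3 : ∑ j' ∈ T3, P *
        ((conjClass n lam).filter fun ω => ∀ p ∈ insert (i, j') K', ω p.1 = p.2).card
        = T3.card * (conjClass n lam).card := by
      have hcongr : ∀ j' ∈ T3, P *
          ((conjClass n lam).filter fun ω => ∀ p ∈ insert (i, j') K', ω p.1 = p.2).card
          = (conjClass n lam).card := by
        intro j' hj'
        rw [mul_comm]
        exact hvalT3 j' hj'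
      rw [Finset.sum_congr rfl hcongr, Finset.sum_const, smul_eq_mul]
    have hsFr : ∑ j' ∈ Fr, P *
        ((conjClass n lam).filter fun ω => ∀ p ∈ insert (i, j') K', ω p.1 = p.2).card
        = Fr.card * (P * ((conjClass n lam).filter fun ω => ∀ p ∈ K, ω p.1 = p.2).card) := by
      have hcongr : ∀ j' ∈ Fr, P *
          ((conjClass n lam).filter fun ω => ∀ p ∈ insert (i, j') K', ω p.1 = p.2).card
          = P * ((conjClass n lam).filter fun ω => ∀ p ∈ K, ω p.1 = p.2).card := by
        intro j' hj'
        rw [hvalFr j' hj']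
      rw [Finset.sum_congr rfl hcongr, Finset.sum_const, smul_eq_mul]
    have hcardS2 : S2.card = m := by
      rw [hS2def, Finset.card_image_of_injOn, hcard']
      intro a ha b hb hab
      exact hwd'.2 a (Finset.mem_coe.mp ha) b (Finset.mem_coe.mp hb) hab
    have hcardB : B.card = m + 1 := by
      rw [hBdef, Finset.card_insert_of_notMem hsS2, hcardS2]
    have hcardBT3 : (B ∪ T3).card = (m + 1) + T3.card := by
      rw [Finset.card_union_of_disjoint hdisj1, hcardB]
    have hcardFr : Fr.card = n - ((m + 1) + T3.card) := by
      rw [hFrdef, Finset.card_sdiff_of_subset (Finset.subset_univ _), hcardBT3]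
      simp
    have hleBT : (m + 1) + T3.card ≤ n := by
      have hcu := Finset.card_le_univ (B ∪ T3)
      rw [hcardBT3] at hcu
      simpa using hcu
    have hjFr : j ∈ Fr := by
      rw [hFrdef, Finset.mem_sdiff]
      refine ⟨Finset.mem_univ _, ?_⟩
      intro hmem
      rcases Finset.mem_union.mp hmem with h | h
      · rcases Finset.mem_insert.mp h with h' | h'
        · rcases hsfst_or with h0 | hf
          · have hsi : s = i := by rw [hsdef, h0, chain_zero]
            exact hij_ne (h'.trans hsi).symm
          · exact hjf' (h' ▸ hf)
        · exact hjs' h'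
      · exact hjf' (Finset.mem_sdiff.mp (Finset.mem_erase.mp h).2).1
    have hFrpos : 0 < Fr.card := Finset.card_pos.mpr ⟨j, hjFr⟩
    have hfinal : (n - (m + 1)) * (conjClass n lam).card
        = T3.card * (conjClass n lam).card
          + Fr.card * (P * ((conjClass n lam).filter fun ω => ∀ p ∈ K, ω p.1 = p.2).card) := by
      rw [← hkey, hsplitsum, hsB, hsT3, hsFr, zero_add]
    have hcnt : n - (m + 1) = T3.card + Fr.card := by omega
    rw [hcnt, add_mul] at hfinal
    have h2 := Nat.add_left_cancel hfinal
    have h3 := Nat.eq_of_mul_eq_mul_left hFrpos h2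
    rw [mul_comm]
    exact h3.symm
end Stmt16Aux

theorem stmt16 (n m : ℕ) (lam : n.Partition) (hparts : ∀ p ∈ lam.parts, m + 1 ≤ p)
    (K : Finset (Fin n × Fin n)) (hm : K.card = m) :
    (AcyclicConstraint K →
      ((conjClass n lam).filter fun ω => ∀ p ∈ K, ω p.1 = p.2).card
          * ∏ t ∈ Finset.Icc 1 m, (n - t)
        = (conjClass n lam).card) ∧
    (¬ AcyclicConstraint K →
      ∀ ω ∈ conjClass n lam, ¬ (∀ p ∈ K, ω p.1 = p.2)) := by
  constructor
  · intro hacyc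
    exact Stmt16Aux.main_count lam m K hm hacyc hparts
  · intro hnacyc
    apply Stmt16Aux.no_sat_of_not_acyclic lam K _ hnacyc
    intro p hp
    rw [hm]
    exact hparts p hp
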